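/- Let n ≥ 1 and m ≥ 6. Let S ⊆ (ℝ^n)^m be the set of tuples (x_1, …, x_m) for which there exist (y_1, …, y_m) ∈ (ℝ^n)^m and a bijection φ of the set of unordered pairs {i, j} of distinct elements of {1, …, m} such that (y_i + y_j)/2 = (x_a + x_b)/2 whenever φ({i, j}) = {a, b}, and yet (y_1, …, y_m) is not a reordering of (x_1, …, x_m) (i.e., there is no permutation σ of {1, …, m} with y_i = x_{σ(i)} for all i). Then S is contained in a set of Lebesgue measure zero in (ℝ^n)^m ≅ ℝ^{nm}. Consequently, if x_1, …, x_m are drawn i.i.d. from a probability measure on ℝ^n that is absolutely continuous with respect to Lebesgue measure, then with probability 1 the points are uniquely determined, up to order, by their m(m−1)/2 pairwise midpoints. -/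

import Mathlib

open MeasureTheory

/-- The multiset of pairwise midpoints `(x i + x j)/2` of a tuple of points, over all
unordered pairs of distinct indices. -/
noncomputable def pairwiseMidpoints {E : Type*} [AddCommGroup E] [Module ℝ E] {m : ℕ}
    (x : Fin m → E) : Multiset E :=
  (Finset.univ.filter fun p : Sym2 (Fin m) => ¬p.IsDiag).val.map
    (Sym2.lift ⟨fun i j => midpoint ℝ (x i) (x j), fun i j => midpoint_comm (x i) (x j)⟩)

section Aux

open Finset

set_option linter.unusedSectionVars false
set_option linter.unusedVariables false
set_option linter.unreachableTactic false
set_option linter.unusedTactic false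

namespace MidRec

variable {m : ℕ}


lemma list_aux {α β : Type*} [DecidableEq α] (f g : α → β) :
    ∀ (l₁ l₂ : List α), (l₁.map f).Perm (l₂.map g) →
      ∃ l' : List α, l'.Perm l₂ ∧ l₁.map f = l'.map g := by
  intro l₁
  induction l₁ with
  | nil =>
    intro l₂ h
    have h0 : l₂.map g = [] := h.symm.eq_nil
    have h1 : l₂ = [] := List.map_eq_nil_iff.1 h0
    exact ⟨[], by simp [h1], by simp⟩
  | cons a t ih =>
    intro l₂ h
    have hmem : f a ∈ l₂.map g := h.subset (by simp)
    obtain ⟨b, hb, hgb⟩ := List.mem_map.1 hmem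
    have hperm : l₂.Perm (b :: l₂.erase b) := List.perm_cons_erase hb
    have h2 : (f a :: t.map f).Perm (f a :: (l₂.erase b).map g) := by
      have h4 := hperm.map g
      simp only [List.map_cons, hgb] at h4
      simpa using h.trans h4
    have h3 := h2.cons_inv
    obtain ⟨l'', hl''p, hl''e⟩ := ih (l₂.erase b) h3
    exact ⟨b :: l'', (hl''p.cons b).trans hperm.symm, by simp [hl''e, hgb]⟩

lemma exists_reindex {α β : Type*} [DecidableEq α] (s : Multiset α) (hs : s.Nodup)
    (f g : α → β) (h : s.map f = s.map g) :
    ∃ φ : α → α, s.map φ = s ∧ ∀ a ∈ s, f a = g (φ a) := by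
  obtain ⟨l, rfl⟩ : ∃ l : List α, (l : Multiset α) = s := ⟨s.toList, s.coe_toList⟩
  have hl : l.Nodup := by simpa using hs
  have hperm : (l.map f).Perm (l.map g) := by
    simpa [← Multiset.coe_eq_coe] using h
  obtain ⟨l', hl'p, hl'e⟩ := list_aux f g l l hperm
  have hlen : l'.length = l.length := hl'p.length_eq
  have hidx : ∀ i : Fin l.length, l.idxOf (l.get i) = i := by
    intro i
    have hget : l.get ⟨l.idxOf (l.get i), by
        exact List.idxOf_lt_length_iff.2 (l.get_mem _)⟩ = l.get i :=
      List.idxOf_get _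
    have h5 := List.nodup_iff_injective_get.1 hl hget
    exact congrArg Fin.val h5
  refine ⟨fun a => l'.getD (l.idxOf a) a, ?_, ?_⟩
  · have hmap : l.map (fun a => l'.getD (l.idxOf a) a) = l' := by
      apply List.ext_getElem
      · simp [hlen]
      · intro i h1 h2
        have h1' : i < l.length := by simpa using h1
        simp only [List.getElem_map]
        have h6 : l.idxOf (l[i]) = i := hidx ⟨i, h1'⟩
        rw [h6]
        exact List.getD_eq_getElem _ _ h2
    calc (l : Multiset α).map (fun a => l'.getD (l.idxOf a) a)
        = (l' : Multiset α) := by rw [Multiset.map_coe, hmap]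
      _ = (l : Multiset α) := Multiset.coe_eq_coe.2 hl'p
  · intro a ha
    have ha' : a ∈ l := by simpa using ha
    obtain ⟨i, rfl⟩ := List.mem_iff_get.1 ha'
    have hfg : f (l.get i) = g (l'[(i : ℕ)]'(by omega)) := by
      have h1 : (l.map f)[(i : ℕ)]'(by simp [i.2]) = (l'.map g)[(i : ℕ)]'(by simp; omega) :=
        List.getElem_of_eq hl'e _
      simpa using h1
    rw [hfg]
    show _ = g (l'.getD (l.idxOf (l.get i)) (l.get i))
    rw [hidx i]
    congr 1
    exact (List.getD_eq_getElem _ _ (by omega)).symm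



def P (m : ℕ) : Finset (Sym2 (Fin m)) := Finset.univ.filter fun p : Sym2 (Fin m) => ¬p.IsDiag

lemma mem_P {i j : Fin m} : s(i, j) ∈ P m ↔ i ≠ j := by
  simp [P, Sym2.mk_isDiag_iff]

noncomputable def pairSum (u : Fin m → ℝ) : Sym2 (Fin m) → ℝ :=
  Sym2.lift ⟨fun a b => u a + u b, fun a b => add_comm (u a) (u b)⟩

lemma pairSum_mk (u : Fin m → ℝ) (i j : Fin m) : pairSum u s(i, j) = u i + u j := rfl

lemma sum_P (u : Fin m → ℝ) :
    ∑ p ∈ P m, pairSum u p = ((m : ℝ) - 1) * ∑ i, u i := by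
  classical
  have himg : ((univ : Finset (Fin m)).offDiag).image Sym2.mk.uncurry = P m := by
    ext q
    induction q using Sym2.ind with
    | _ a b =>
      simp only [mem_image, mem_P]
      constructor
      · rintro ⟨⟨c, d⟩, hcd, hq⟩
        rcases Sym2.eq_iff.1 hq with ⟨rfl, rfl⟩ | ⟨rfl, rfl⟩
        · exact (mem_offDiag.1 hcd).2.2
        · exact fun h => (mem_offDiag.1 hcd).2.2 h.symm
      · intro hab
        exact ⟨(a, b), mem_offDiag.2 ⟨mem_univ _, mem_univ _, hab⟩, rfl⟩
  have hcomp : ∑ ab ∈ (univ : Finset (Fin m)).offDiag, pairSum u (Sym2.mk.uncurry ab)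
      = ∑ q ∈ (univ : Finset (Fin m)).offDiag.image Sym2.mk.uncurry,
          ((univ : Finset (Fin m)).offDiag.filter fun ab => Sym2.mk.uncurry ab = q).card • pairSum u q :=
    Finset.sum_comp (pairSum u) Sym2.mk.uncurry
  have hfib : ∀ q ∈ P m, ((univ : Finset (Fin m)).offDiag.filter
      fun ab => Sym2.mk.uncurry ab = q).card = 2 := by
    intro q hq
    induction q using Sym2.ind with
    | _ a b =>
      have hab : a ≠ b := mem_P.1 hq
      have : ((univ : Finset (Fin m)).offDiag.filter fun ab => Sym2.mk.uncurry ab = s(a, b))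
          = {(a, b), (b, a)} := by
        ext ⟨c, d⟩
        simp only [mem_filter, mem_offDiag, mem_univ, true_and, mem_insert, mem_singleton,
          Prod.mk.injEq]
        constructor
        · rintro ⟨hcd, hq2⟩
          rcases Sym2.eq_iff.1 hq2 with ⟨rfl, rfl⟩ | ⟨rfl, rfl⟩
          · exact Or.inl ⟨rfl, rfl⟩
          · exact Or.inr ⟨rfl, rfl⟩
        · rintro (⟨rfl, rfl⟩ | ⟨rfl, rfl⟩)
          · exact ⟨hab, Sym2.eq_iff.2 (Or.inl ⟨rfl, rfl⟩)⟩
          · exact ⟨hab.symm, Sym2.eq_iff.2 (Or.inr ⟨rfl, rfl⟩)⟩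
      rw [this]
      rw [card_insert_of_notMem (by simp [Prod.ext_iff, hab]), card_singleton]
  have hL : ∑ ab ∈ (univ : Finset (Fin m)).offDiag, pairSum u (Sym2.mk.uncurry ab)
      = 2 * ∑ p ∈ P m, pairSum u p := by
    rw [hcomp, himg]
    rw [Finset.sum_congr rfl fun q hq => by rw [hfib q hq]]
    simp [smul_eq_mul, Finset.mul_sum]
  -- compute LHS directly
  have hprod : ∑ ab ∈ (univ : Finset (Fin m)) ×ˢ (univ : Finset (Fin m)), pairSum u (Sym2.mk.uncurry ab)
      = 2 * (m : ℝ) * ∑ i, u i := by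
    rw [Finset.sum_product]
    have : ∀ a, ∑ b, pairSum u (Sym2.mk.uncurry (a, b)) = (m : ℝ) * u a + ∑ i, u i := by
      intro a
      simp only [Function.uncurry_apply_pair, pairSum_mk]
      rw [Finset.sum_add_distrib, Finset.sum_const, card_univ, Fintype.card_fin]
      simp [nsmul_eq_mul]
    rw [Finset.sum_congr rfl fun a _ => this a]
    rw [Finset.sum_add_distrib, ← Finset.mul_sum, Finset.sum_const, card_univ, Fintype.card_fin]
    simp [nsmul_eq_mul]
    ring
  have hdiag : ∑ ab ∈ (univ : Finset (Fin m)).diag, pairSum u (Sym2.mk.uncurry ab)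
      = 2 * ∑ i, u i := by
    rw [Finset.sum_diag]
    simp only [Function.uncurry_apply_pair, pairSum_mk]
    rw [Finset.sum_add_distrib]
    ring
  have hsplit : ∑ ab ∈ (univ : Finset (Fin m)) ×ˢ (univ : Finset (Fin m)), pairSum u (Sym2.mk.uncurry ab)
      = ∑ ab ∈ (univ : Finset (Fin m)).diag, pairSum u (Sym2.mk.uncurry ab)
        + ∑ ab ∈ (univ : Finset (Fin m)).offDiag, pairSum u (Sym2.mk.uncurry ab) := by
    rw [← Finset.diag_union_offDiag]
    exact Finset.sum_union (Finset.disjoint_diag_offDiag _)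
  have := hsplit
  rw [hprod, hdiag, hL] at this
  linarith


lemma exists_two_ne {m : ℕ} (hm : 6 ≤ m) (i : Fin m) :
    ∃ j k : Fin m, i ≠ j ∧ i ≠ k ∧ j ≠ k := by
  have h0 : (0 : ℕ) < m := by omega
  have h1 : (1 : ℕ) < m := by omega
  have h2 : (2 : ℕ) < m := by omega
  set a : Fin m := ⟨0, h0⟩
  set b : Fin m := ⟨1, h1⟩
  set c : Fin m := ⟨2, h2⟩
  have hab : a ≠ b := by simp [a, b, Fin.ext_iff]
  have hac : a ≠ c := by simp [a, c, Fin.ext_iff]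
  have hbc : b ≠ c := by simp [b, c, Fin.ext_iff]
  by_cases hia : i = a
  · exact ⟨b, c, by simp [hia, hab], by simp [hia, hac], hbc⟩
  by_cases hib : i = b
  · exact ⟨a, c, by simp [hib]; exact fun h => hab h.symm, by simp [hib, hbc], hac⟩
  · exact ⟨a, b, fun h => hia h, fun h => hib h, hab⟩

lemma classify {m : ℕ} (hm : 6 ≤ m) (f : Fin m → ℝ)
    (hpair : ∀ i j, i ≠ j → f i + f j = 0 ∨ f i + f j = 1)
    (hsum : ∑ i, f i = 1) :
    ∃ i0, f i0 = 1 ∧ ∀ j, j ≠ i0 → f j = 0 := by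
  classical
  have hval : ∀ i, f i = -(1/2) ∨ f i = 0 ∨ f i = 1/2 ∨ f i = 1 := by
    intro i
    obtain ⟨j, k, hij, hik, hjk⟩ := exists_two_ne hm i
    have e : 2 * f i = (f i + f j) + (f i + f k) - (f j + f k) := by ring
    rcases hpair i j hij with h1 | h1 <;> rcases hpair i k hik with h2 | h2 <;>
      rcases hpair j k hjk with h3 | h3 <;>
      first
        | (left; linarith)
        | (right; left; linarith)
        | (right; right; left; linarith)
        | (right; right; right; linarith)
  by_cases h1 : ∃ i, f i = 1
  · obtain ⟨i0, hi0⟩ := h1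
    refine ⟨i0, hi0, fun j hj => ?_⟩
    rcases hval j with h | h | h | h <;> rcases hpair j i0 hj with h2 | h2 <;> linarith
  · push_neg at h1
    by_cases h2 : ∃ i, f i = 1/2
    · obtain ⟨i1, hi1⟩ := h2
      exfalso
      -- every value is 1/2 or -1/2
      have hhalf : ∀ j, f j = 1/2 ∨ f j = -(1/2) := by
        intro j
        by_cases hj : j = i1
        · exact Or.inl (hj ▸ hi1)
        · rcases hval j with h | h | h | h <;> rcases hpair j i1 hj with h3 | h3 <;>
            first
              | (left; linarith)
              | (right; linarith)
              | (exact absurd h (by intro hh; rw [hh] at h3; linarith))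
      set B := univ.filter fun j => f j = -(1/2) with hB
      have hcard : B.card ≤ 1 := by
        by_contra hc
        push_neg at hc
        obtain ⟨u, hu, w, hw, huw⟩ := Finset.one_lt_card.1 hc
        have hu' : f u = -(1/2) := (mem_filter.1 hu).2
        have hw' : f w = -(1/2) := (mem_filter.1 hw).2
        rcases hpair u w huw with h3 | h3 <;> linarith
      have hsplit : ∑ j ∈ univ \ B, f j + ∑ j ∈ B, f j = ∑ j, f j :=
        Finset.sum_sdiff (Finset.subset_univ B)
      have hBsum : ∑ j ∈ B, f j = -(1/2) * B.card := by
        rw [Finset.sum_congr rfl fun j hj => (mem_filter.1 hj).2]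
        rw [Finset.sum_const, nsmul_eq_mul]
        ring
      have hCsum : ∑ j ∈ univ \ B, f j = (1/2) * (m - B.card) := by
        have hval2 : ∀ j ∈ univ \ B, f j = 1/2 := by
          intro j hj
          rcases hhalf j with h | h
          · exact h
          · exact absurd (show j ∈ B by simp [hB, h]) (Finset.mem_sdiff.1 hj).2
        rw [Finset.sum_congr rfl hval2]
        rw [Finset.sum_const, Finset.card_sdiff_of_subset (Finset.subset_univ B)]
        have : (univ : Finset (Fin m)).card = m := by simp
        rw [this]
        have hle : B.card ≤ m := by
          calc B.card ≤ (univ : Finset (Fin m)).card := Finset.card_le_card (Finset.subset_univ B)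
          _ = m := by simp
        rw [nsmul_eq_mul]
        push_cast [hle]
        ring
      have hBc : (B.card : ℝ) ≤ 1 := by exact_mod_cast hcard
      have hm' : (6 : ℝ) ≤ m := by exact_mod_cast hm
      rw [← hsplit, hBsum, hCsum] at hsum
      linarith
    · push_neg at h2
      exfalso
      have hzero : ∀ i, f i = 0 := by
        intro i
        rcases hval i with h | h | h | h
        · obtain ⟨j, k, hij, hik, hjk⟩ := exists_two_ne hm i
          rcases hval j with hj | hj | hj | hj
          · rcases hpair i j hij with h3 | h3 <;> linarith
          · rcases hpair i j hij with h3 | h3 <;> linarith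
          · exact absurd hj (h2 j)
          · exact absurd hj (h1 j)
        · exact h
        · exact absurd h (h2 i)
        · exact absurd h (h1 i)
      rw [Finset.sum_congr rfl fun i _ => hzero i] at hsum
      simp at hsum


variable {m : ℕ} {V : Type*} [AddCommGroup V] [Module ℝ V] [NoZeroSMulDivisors ℝ V]

noncomputable def mid (x : Fin m → V) : Sym2 (Fin m) → V :=
  Sym2.lift ⟨fun i j => midpoint ℝ (x i) (x j), fun i j => midpoint_comm (x i) (x j)⟩

noncomputable def pairSumV (u : Fin m → V) : Sym2 (Fin m) → V :=
  Sym2.lift ⟨fun a b => u a + u b, fun a b => add_comm (u a) (u b)⟩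

lemma pairSumV_mk (u : Fin m → V) (i j : Fin m) : pairSumV u s(i, j) = u i + u j := rfl

lemma pairSumV_eq_two_mid (x : Fin m → V) (p : Sym2 (Fin m)) :
    pairSumV x p = mid x p + mid x p := by
  induction p using Sym2.ind with
  | _ i j => rw [pairSumV_mk]; exact (midpoint_add_self ℝ (x i) (x j)).symm

-- indicator coefficient
noncomputable def cf (k : Fin m) : Sym2 (Fin m) → ℝ :=
  Sym2.lift ⟨fun a b => (if a = k then (1:ℝ) else 0) + (if b = k then (1:ℝ) else 0),
    fun a b => add_comm _ _⟩

lemma cf_mk (k a b : Fin m) :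
    cf k s(a, b) = (if a = k then (1:ℝ) else 0) + (if b = k then (1:ℝ) else 0) := rfl

lemma caseB (hm : 6 ≤ m) (v : V) (hv : v ≠ 0)
    (φ : Sym2 (Fin m) → Sym2 (Fin m))
    (hmap : (P m).val.map φ = (P m).val)
    (hall : ∀ x : Fin m → V, ∃ y, ∀ p ∈ P m, mid y p = mid x (φ p)) :
    ∃ σ : Equiv.Perm (Fin m), ∀ i j : Fin m, i ≠ j → φ s(i, j) = s(σ i, σ j) := by
  classical
  have hinj : Function.Injective fun r : ℝ => r • v := smul_left_injective ℝ hv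
  have hφP : ∀ p ∈ P m, φ p ∈ P m := by
    intro p hp
    have : φ p ∈ (P m).val.map φ := Multiset.mem_map_of_mem φ (by simpa using hp)
    rw [hmap] at this
    simpa using this
  -- convert mid-equations into pair-sum equations
  have hsys : ∀ x y : Fin m → V, (∀ p ∈ P m, mid y p = mid x (φ p)) →
      ∀ i j, i ≠ j → y i + y j = pairSumV x (φ s(i, j)) := by
    intro x y hxy i j hij
    have h1 : pairSumV y s(i, j) = pairSumV x (φ s(i, j)) := by
      rw [pairSumV_eq_two_mid, pairSumV_eq_two_mid, hxy _ (mem_P.2 hij)]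
    simpa [pairSumV_mk] using h1
  -- test tuples
  set xk : Fin m → (Fin m → V) := fun k j => if j = k then v else 0 with hxk
  have hSxk : ∀ k q, pairSumV (xk k) q = cf k q • v := by
    intro k q
    induction q using Sym2.ind with
    | _ a b =>
      rw [pairSumV_mk, cf_mk, add_smul]
      simp only [hxk]
      split_ifs <;> simp
  set yk : Fin m → (Fin m → V) := fun k => Classical.choose (hall (xk k)) with hyk
  have hks : ∀ k i j, i ≠ j → yk k i + yk k j = cf k (φ s(i, j)) • v := by
    intro k i j hij
    rw [← hSxk]
    exact hsys (xk k) (yk k) (Classical.choose_spec (hall (xk k))) i j hij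
  -- each yk k i is a multiple of v
  have hmul : ∀ k i, ∃ r : ℝ, yk k i = r • v := by
    intro k i
    obtain ⟨j, l, hij, hil, hjl⟩ := exists_two_ne hm i
    refine ⟨(cf k (φ s(i, j)) + cf k (φ s(i, l)) - cf k (φ s(j, l))) / 2, ?_⟩
    have e : (2 : ℝ) • yk k i
        = (yk k i + yk k j) + (yk k i + yk k l) - (yk k j + yk k l) := by
      rw [two_smul]; abel
    rw [hks k i j hij, hks k i l hil, hks k j l hjl] at e
    have e2 : (2 : ℝ) • yk k i
        = ((cf k (φ s(i, j)) + cf k (φ s(i, l)) - cf k (φ s(j, l)))) • v := by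
      rw [e, sub_smul, add_smul]
    have := congrArg (fun w => (2 : ℝ)⁻¹ • w) e2
    simpa [smul_smul, div_eq_inv_mul, mul_comm] using this
  set t : Fin m → Fin m → ℝ := fun i k => Classical.choose (hmul k i) with ht
  have htv : ∀ i k, yk k i = t i k • v := fun i k => Classical.choose_spec (hmul k i)
  have hpair' : ∀ k i j, i ≠ j → t i k + t j k = cf k (φ s(i, j)) := by
    intro k i j hij
    apply hinj
    have := hks k i j hij
    rw [htv i k, htv j k] at this
    simpa [add_smul] using this
  -- cf values on off-diagonal pairs
  have hc01 : ∀ k q, q ∈ P m → cf k q = 0 ∨ cf k q = 1 := by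
    intro k q hq
    induction q using Sym2.ind with
    | _ a b =>
      have hab : a ≠ b := mem_P.1 hq
      rw [cf_mk]
      rcases eq_or_ne a k with rfl | ha
      · rw [if_pos rfl, if_neg (fun h => hab h.symm)]; right; ring
      · rcases eq_or_ne b k with rfl | hb
        · rw [if_neg ha, if_pos rfl]; right; ring
        · rw [if_neg ha, if_neg hb]; left; ring
  -- column sums
  have hcol : ∀ k, ∑ i, t i k = 1 := by
    intro k
    have h1 : ∑ p ∈ P m, pairSum (fun i => t i k) p = ∑ p ∈ P m, cf k (φ p) := by
      apply Finset.sum_congr rfl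
      intro p hp
      induction p using Sym2.ind with
      | _ a b => rw [pairSum_mk]; exact hpair' k a b (mem_P.1 hp)
    have h2 : ∑ p ∈ P m, cf k (φ p) = ∑ p ∈ P m, cf k p := by
      have : ((P m).val.map fun p => cf k (φ p)) = ((P m).val.map fun p => cf k p) := by
        rw [show (fun p => cf k (φ p)) = (cf k) ∘ φ from rfl, ← Multiset.map_map, hmap]
      calc ∑ p ∈ P m, cf k (φ p) = ((P m).val.map fun p => cf k (φ p)).sum := rfl
        _ = ((P m).val.map fun p => cf k p).sum := by rw [this]
        _ = ∑ p ∈ P m, cf k p := rfl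
    have h3 : ∑ p ∈ P m, cf k p = ((m : ℝ) - 1) * 1 := by
      have he : ∀ p, cf k p = pairSum (fun a => if a = k then (1:ℝ) else 0) p := by
        intro p
        induction p using Sym2.ind with
        | _ a b => rfl
      rw [Finset.sum_congr rfl fun p _ => he p, sum_P]
      congr 1
      simp
    have h4 := sum_P (fun i => t i k)
    rw [h1, h2, h3] at h4
    have hm1 : (m : ℝ) - 1 ≠ 0 := by
      have : (6 : ℝ) ≤ m := by exact_mod_cast hm
      linarith
    have := mul_left_cancel₀ hm1 (h4.symm)
    linarith [this]
  -- row sums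
  have hrow : ∀ i, ∑ k, t i k = 1 := by
    intro i
    set Y : Fin m → V := fun i => ∑ k, yk k i with hY
    have hYpair : ∀ i j, i ≠ j → Y i + Y j = v + v := by
      intro i j hij
      have h1 : Y i + Y j = ∑ k, (yk k i + yk k j) := by
        rw [hY]; rw [← Finset.sum_add_distrib]
      rw [h1, Finset.sum_congr rfl fun k _ => hks k i j hij]
      rw [← Finset.sum_smul]
      have hq := hφP _ (mem_P.2 hij)
      have h2 : ∑ k, cf k (φ s(i, j)) = 2 := by
        set q := φ s(i, j)
        clear_value q
        induction q using Sym2.ind with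
        | _ a b =>
          have hab : a ≠ b := mem_P.1 hq
          have : ∀ k, cf k s(a, b) = (if a = k then (1:ℝ) else 0) + (if b = k then 1 else 0) :=
            fun k => rfl
          rw [Finset.sum_congr rfl fun k _ => this k, Finset.sum_add_distrib]
          simp [Finset.sum_ite_eq]
          norm_num
      rw [h2, two_smul]
    obtain ⟨j, l, hij, hil, hjl⟩ := exists_two_ne hm i
    have e : (2 : ℝ) • Y i = (Y i + Y j) + (Y i + Y l) - (Y j + Y l) := by
      rw [two_smul]; abel
    rw [hYpair i j hij, hYpair i l hil, hYpair j l hjl] at e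
    have e2 : (2 : ℝ) • Y i = (2 : ℝ) • v := by
      rw [e, two_smul]; abel
    have hYi : Y i = v := smul_right_injective V (by norm_num : (2:ℝ) ≠ 0) e2
    have h5 : Y i = (∑ k, t i k) • v := by
      rw [hY]
      simp only []
      rw [Finset.sum_congr rfl fun k _ => htv i k, ← Finset.sum_smul]
    apply hinj
    simp only []
    rw [← h5, hYi, one_smul]
  -- classification of columns
  have hcls : ∀ k, ∃ i0, t i0 k = 1 ∧ ∀ j, j ≠ i0 → t j k = 0 := by
    intro k
    apply classify hm
    · intro i j hij
      rcases hc01 k (φ s(i, j)) (hφP _ (mem_P.2 hij)) with h | h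
      · left; rw [hpair' k i j hij, h]
      · right; rw [hpair' k i j hij, h]
    · exact hcol k
  set ρ : Fin m → Fin m := fun k => Classical.choose (hcls k) with hρ
  have hρ1 : ∀ k, t (ρ k) k = 1 := fun k => (Classical.choose_spec (hcls k)).1
  have hρ0 : ∀ k j, j ≠ ρ k → t j k = 0 := fun k => (Classical.choose_spec (hcls k)).2
  have hte : ∀ i k, t i k = if ρ k = i then 1 else 0 := by
    intro i k
    rcases eq_or_ne (ρ k) i with rfl | h
    · rw [if_pos rfl]; exact hρ1 k
    · rw [if_neg h]; exact hρ0 k i (fun hh => h hh.symm)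
  -- ρ is bijective
  have hfib : ∀ i, (univ.filter fun k => ρ k = i).card = 1 := by
    intro i
    have h1 : ((univ.filter fun k => ρ k = i).card : ℝ) = ∑ k, t i k := by
      rw [Finset.sum_congr rfl fun k _ => hte i k]
      exact (Finset.sum_boole _ _).symm
    rw [hrow i] at h1
    exact_mod_cast h1
  have hρbij : Function.Bijective ρ := by
    constructor
    · intro k k' hkk
      have h1 : k ∈ univ.filter fun a => ρ a = ρ k' := by simp [hkk]
      have h2 : k' ∈ univ.filter fun a => ρ a = ρ k' := by simp
      have := Finset.card_le_one.1 (le_of_eq (hfib (ρ k'))) k h1 k' h2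
      exact this
    · intro i
      have := hfib i
      obtain ⟨k, hk⟩ := Finset.card_eq_one.1 this
      refine ⟨k, ?_⟩
      have : k ∈ univ.filter fun a => ρ a = i := hk ▸ Finset.mem_singleton_self k
      exact (Finset.mem_filter.1 this).2
  let ρe : Equiv.Perm (Fin m) := Equiv.ofBijective ρ hρbij
  set σ : Equiv.Perm (Fin m) := ρe.symm with hσ
  have hρσ : ∀ i, ρ (σ i) = i := fun i => ρe.apply_symm_apply i
  refine ⟨σ, ?_⟩
  intro i j hij
  -- identify φ s(i,j)
  have hq := hφP _ (mem_P.2 hij)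
  have hkey : ∀ k, cf k (φ s(i, j)) = (if ρ k = i then (1:ℝ) else 0) + (if ρ k = j then 1 else 0) := by
    intro k
    rw [← hpair' k i j hij, hte i k, hte j k]
  set q := φ s(i, j) with hqdef
  clear_value q
  induction q using Sym2.ind with
  | _ a b =>
    have hab : a ≠ b := mem_P.1 hq
    have hcfab : ∀ k, cf k s(a, b) = (if a = k then (1:ℝ) else 0) + (if b = k then 1 else 0) :=
      fun k => rfl
    -- evaluate hkey at k = σ i and k = σ j
    have h1 := hkey (σ i)
    have h2 := hkey (σ j)
    rw [hcfab] at h1 h2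
    rw [hρσ i] at h1
    rw [hρσ j] at h2
    rw [if_pos (show i = i from rfl), if_neg (show ¬(i = j) from hij)] at h1
    rw [if_neg (show ¬(j = i) from fun h => hij h.symm), if_pos (show j = j from rfl)] at h2
    have hσij : σ i ≠ σ j := fun h => hij (σ.injective h)
    by_cases hai : a = σ i
    · have haj : a ≠ σ j := fun h => hσij (hai.symm.trans h)
      rw [if_neg haj] at h2
      by_cases hbj : b = σ j
      · rw [hai, hbj]
      · rw [if_neg hbj] at h2; norm_num at h2
    · rw [if_neg hai] at h1
      by_cases hbi : b = σ i
      · have hbj : b ≠ σ j := fun h => hσij (hbi.symm.trans h)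
        rw [if_neg hbj] at h2
        by_cases haj : a = σ j
        · rw [haj, hbi]; exact Sym2.eq_swap
        · rw [if_neg haj] at h2; norm_num at h2
      · rw [if_neg hbi] at h1; norm_num at h1

lemma eq_perm (hm : 6 ≤ m) {x y : Fin m → V} {φ : Sym2 (Fin m) → Sym2 (Fin m)}
    (hpt : ∀ p ∈ P m, mid y p = mid x (φ p))
    {σ : Equiv.Perm (Fin m)} (hσ : ∀ i j : Fin m, i ≠ j → φ s(i, j) = s(σ i, σ j)) :
    ∀ i, y i = x (σ i) := by
  have key : ∀ a b : Fin m, a ≠ b → y a + y b = x (σ a) + x (σ b) := by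
    intro a b hab
    have h1 : pairSumV y s(a, b) = pairSumV x (φ s(a, b)) := by
      rw [pairSumV_eq_two_mid, pairSumV_eq_two_mid, hpt _ (mem_P.2 hab)]
    rw [hσ a b hab] at h1
    simpa [pairSumV_mk] using h1
  intro i
  obtain ⟨j, l, hij, hil, hjl⟩ := exists_two_ne hm i
  have e : (2:ℝ) • y i = (2:ℝ) • x (σ i) := by
    have e2 : y i + y i = (y i + y j) + (y i + y l) - (y j + y l) := by abel
    rw [two_smul, two_smul, e2, key i j hij, key i l hil, key j l hjl]
    abel
  exact smul_right_injective V (by norm_num : (2:ℝ) ≠ 0) e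

lemma mid_add (x y : Fin m → V) (p : Sym2 (Fin m)) :
    mid (x + y) p = mid x p + mid y p := by
  induction p using Sym2.ind with
  | _ i j =>
    simp only [mid, Sym2.lift_mk, Pi.add_apply, midpoint_eq_smul_add]
    rw [← smul_add]
    congr 1
    abel

lemma mid_smul (c : ℝ) (x : Fin m → V) (p : Sym2 (Fin m)) :
    mid (c • x) p = c • mid x p := by
  induction p using Sym2.ind with
  | _ i j =>
    simp only [mid, Sym2.lift_mk, Pi.smul_apply, midpoint_eq_smul_add, smul_smul, ← smul_add]
    rw [mul_comm]

lemma mid_zero (p : Sym2 (Fin m)) : mid (0 : Fin m → V) p = 0 := by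
  induction p using Sym2.ind with
  | _ i j => simp [mid, Sym2.lift_mk]


universe u

lemma pi_ac : ∀ {k : ℕ} {α : Fin k → Type u} [inst : ∀ i, MeasurableSpace (α i)]
    (μ ν : ∀ i, Measure (α i)) [∀ i, SigmaFinite (μ i)] [∀ i, SigmaFinite (ν i)],
    (∀ i, μ i ≪ ν i) → Measure.pi μ ≪ Measure.pi ν
  | 0, α, inst, μ, ν, _, _, h => by
      rw [Measure.pi_of_empty μ, Measure.pi_of_empty ν]
  | (k+1), α, inst, μ, ν, _, _, h => by
      have h1 := ((measurePreserving_piFinSuccAbove μ 0).symm _).map_eq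
      have h2 := ((measurePreserving_piFinSuccAbove ν 0).symm _).map_eq
      rw [← h1, ← h2]
      exact ((h 0).prod (pi_ac _ _ (fun j => h _))).map (MeasurableEquiv.measurable _)


end MidRec

end Aux

theorem midpoint_recovery (n m : ℕ) (hn : 1 ≤ n) (hm : 6 ≤ m) :
    ∃ Z : Set (Fin m → EuclideanSpace ℝ (Fin n)),
      volume Z = 0 ∧
      {x : Fin m → EuclideanSpace ℝ (Fin n) |
          ∃ y : Fin m → EuclideanSpace ℝ (Fin n),
            pairwiseMidpoints y = pairwiseMidpoints x ∧
            ¬∃ σ : Equiv.Perm (Fin m), ∀ i, y i = x (σ i)} ⊆ Z ∧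
      ∀ μ : Measure (EuclideanSpace ℝ (Fin n)), IsProbabilityMeasure μ → μ ≪ volume →
        Measure.pi (fun _ : Fin m => μ) Z = 0 := by
  classical
  haveI : Measure.IsAddHaarMeasure (volume : Measure (Fin m → EuclideanSpace ℝ (Fin n))) := ⟨⟩
  set E := EuclideanSpace ℝ (Fin n) with hE
  let U : (Sym2 (Fin m) → Sym2 (Fin m)) → Submodule ℝ (Fin m → E) := fun φ =>
    { carrier := {x | ∃ y : Fin m → E, ∀ p ∈ MidRec.P m, MidRec.mid y p = MidRec.mid x (φ p)}
      add_mem' := by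
        rintro x x' ⟨y, hy⟩ ⟨y', hy'⟩
        exact ⟨y + y', fun p hp => by
          rw [MidRec.mid_add, MidRec.mid_add, hy p hp, hy' p hp]⟩
      zero_mem' := ⟨0, fun p hp => by rw [MidRec.mid_zero, MidRec.mid_zero]⟩
      smul_mem' := by
        rintro c x ⟨y, hy⟩
        exact ⟨c • y, fun p hp => by
          rw [MidRec.mid_smul, MidRec.mid_smul, hy p hp]⟩ }
  have hZnull : volume (⋃ (φ : Sym2 (Fin m) → Sym2 (Fin m)) (_ : U φ ≠ ⊤),
      (U φ : Set (Fin m → E))) = 0 := by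
    refine measure_iUnion_null fun φ => measure_iUnion_null fun hφ => ?_
    exact Measure.addHaar_submodule _ _ hφ
  refine ⟨⋃ (φ : Sym2 (Fin m) → Sym2 (Fin m)) (_ : U φ ≠ ⊤), (U φ : Set (Fin m → E)),
    hZnull, ?_, ?_⟩
  · rintro x ⟨y, hxy, hnp⟩
    have hmm : (MidRec.P m).val.map (MidRec.mid y) = (MidRec.P m).val.map (MidRec.mid x) := hxy
    obtain ⟨φ, hmap, hpt⟩ := MidRec.exists_reindex _ (MidRec.P m).nodup _ _ hmm
    have hpt' : ∀ p ∈ MidRec.P m, MidRec.mid y p = MidRec.mid x (φ p) :=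
      fun p hp => hpt p (Finset.mem_val.mpr hp)
    have hxU : x ∈ U φ := ⟨y, hpt'⟩
    have hne : U φ ≠ ⊤ := by
      intro htop
      have hall : ∀ z : Fin m → E, ∃ w : Fin m → E,
          ∀ p ∈ MidRec.P m, MidRec.mid w p = MidRec.mid z (φ p) := by
        intro z
        exact Submodule.eq_top_iff'.1 htop z
      have hv : (EuclideanSpace.single (⟨0, hn⟩ : Fin n) (1:ℝ)) ≠ 0 := by
        intro h
        have h1 : (EuclideanSpace.single (⟨0, hn⟩ : Fin n) (1:ℝ)) ⟨0, hn⟩ = 1 := by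
          simp [EuclideanSpace.single_apply]
        rw [h] at h1
        simp at h1
      obtain ⟨σ, hσ⟩ := MidRec.caseB hm _ hv φ hmap hall
      exact hnp ⟨σ, MidRec.eq_perm hm hpt' hσ⟩
    exact Set.mem_iUnion₂.2 ⟨φ, hne, hxU⟩
  · intro μ hμprob hμac
    have hpi : Measure.pi (fun _ : Fin m => μ) ≪
        Measure.pi (fun _ : Fin m => (volume : Measure E)) :=
      MidRec.pi_ac _ _ (fun _ => hμac)
    apply hpi
    rw [← MeasureTheory.volume_pi]
    exact hZnull
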